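/- Fix an SKP [U_{i,j}, β_{i,j}] as in the paper. If a key polynomial U_{i,j} is nonzero, then as a polynomial in X_i over k[[X_0,…,X_{i−1}]] it is monic of degree d_{i,j}: U_{i,j} = X_i^{d_{i,j}} + a_{d_{i,j}−1} X_i^{d_{i,j}−1} + ⋯ + a_0, where each coefficient a_{j'} ∈ k[[X_0,…,X_{i−1}]] has zero constant term; moreover when j is not a limit ordinal, d_{i,j} = n_{i,j−1}·d_{i,j−1}. -/

import Mathlib

/-- Lemma 3.1: each key polynomial of an SKP (level `i`, coefficients in
`R = k[[X_0,…,X_{i-1}]]`, successor recursion `U_{j+1} = U_j^{n_j} − c_j·∏_{j'<j} U_{j'}^{m_{j,j'}}`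
with the lower-level factor `c_j` in the maximal ideal) is monic in `X_i` of degree
`d_j`, with all lower coefficients having zero constant term; moreover `d_{j+1} = n_j·d_j`. -/
theorem stmt8 {k : Type*} [Field k] (e : ℕ)
    (U : ℕ → Polynomial (MvPowerSeries (Fin e) k))
    (n : ℕ → ℕ) (hn : ∀ j, 1 ≤ n j)
    (c : ℕ → MvPowerSeries (Fin e) k)
    (hc : ∀ j, MvPowerSeries.constantCoeff (c j) = 0)
    (m : ℕ → ℕ → ℕ) (hm : ∀ j j', j' < j → m j j' < n j')
    (hU0 : U 0 = Polynomial.X)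
    (hUs : ∀ j, U (j + 1) = (U j) ^ (n j) -
      Polynomial.C (c j) * ∏ j' ∈ Finset.range j, (U j') ^ (m j j'))
    (d : ℕ → ℕ) (hd0 : d 0 = 1) (hds : ∀ j, d (j + 1) = n j * d j) :
    ∀ j, (U j).Monic ∧ (U j).natDegree = d j ∧
      ∀ l < d j, MvPowerSeries.constantCoeff ((U j).coeff l) = 0 := by
  set φ := MvPowerSeries.constantCoeff (σ := Fin e) (R := k) with hφ
  have hd_pos : ∀ j, 1 ≤ d j := by
    intro j
    induction j with
    | zero => simp [hd0]
    | succ j ih =>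
      rw [hds]
      exact le_trans ih (Nat.le_mul_of_pos_left _ (hn j))
  have hsum : ∀ j, ∑ j' ∈ Finset.range j, (n j' - 1) * d j' = d j - 1 := by
    intro j
    induction j with
    | zero => simp [hd0]
    | succ j ih =>
      rw [Finset.sum_range_succ, ih, hds, Nat.sub_one_mul]
      have h1 : d j ≤ n j * d j := Nat.le_mul_of_pos_left _ (hn j)
      have h2 := hd_pos j
      omega
  have key : ∀ j, (U j).Monic ∧ (U j).natDegree = d j ∧
      (U j).map φ = Polynomial.X ^ d j := by
    intro j
    induction j using Nat.strong_induction_on with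
    | _ j ih =>
      match j with
      | 0 =>
        refine ⟨?_, ?_, ?_⟩ <;> simp [hU0, hd0, Polynomial.monic_X]
      | j + 1 =>
        have hmonpow : ((U j) ^ (n j)).Monic := (ih j (Nat.lt_succ_self j)).1.pow (n j)
        have hdegpow : ((U j) ^ (n j)).natDegree = n j * d j := by
          rw [Polynomial.natDegree_pow, (ih j (Nat.lt_succ_self j)).2.1]
        have hdegq : (Polynomial.C (c j) *
            ∏ j' ∈ Finset.range j, (U j') ^ (m j j')).natDegree < n j * d j := by
          calc (Polynomial.C (c j) *
              ∏ j' ∈ Finset.range j, (U j') ^ (m j j')).natDegree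
              ≤ (∏ j' ∈ Finset.range j, (U j') ^ (m j j')).natDegree :=
                Polynomial.natDegree_C_mul_le _ _
            _ ≤ ∑ j' ∈ Finset.range j, ((U j') ^ (m j j')).natDegree :=
                Polynomial.natDegree_prod_le _ _
            _ ≤ ∑ j' ∈ Finset.range j, (n j' - 1) * d j' := by
                apply Finset.sum_le_sum
                intro j' hj'
                simp only [Finset.mem_range] at hj'
                calc ((U j') ^ (m j j')).natDegree
                    ≤ m j j' * (U j').natDegree := Polynomial.natDegree_pow_le
                  _ = m j j' * d j' := by
                      rw [(ih j' (hj'.trans_le (Nat.le_succ j))).2.1]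
                  _ ≤ (n j' - 1) * d j' := by
                      apply Nat.mul_le_mul_right
                      have := hm j j' hj'
                      omega
            _ = d j - 1 := hsum j
            _ < n j * d j := by
                have h1 : d j ≤ n j * d j := Nat.le_mul_of_pos_left _ (hn j)
                have h2 := hd_pos j
                omega
        have hdeglt : (Polynomial.C (c j) *
            ∏ j' ∈ Finset.range j, (U j') ^ (m j j')).natDegree
            < ((U j) ^ (n j)).natDegree := by rw [hdegpow]; exact hdegq
        have hmon : (U (j + 1)).Monic := by
          rw [hUs j]
          exact hmonpow.sub_of_left (Polynomial.degree_lt_degree hdeglt)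
        have hdeg : (U (j + 1)).natDegree = d (j + 1) := by
          rw [hUs j, Polynomial.natDegree_sub_eq_left_of_natDegree_lt hdeglt, hdegpow,
            hds]
        refine ⟨hmon, hdeg, ?_⟩
        rw [hUs j, Polynomial.map_sub, Polynomial.map_mul, Polynomial.map_C, hc j,
          map_zero, zero_mul, sub_zero, Polynomial.map_pow,
          (ih j (Nat.lt_succ_self j)).2.2, ← pow_mul, hds, mul_comm]
  intro j
  obtain ⟨h1, h2, h3⟩ := key j
  refine ⟨h1, h2, fun l hl => ?_⟩
  have := congrArg (fun p => Polynomial.coeff p l) h3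
  simp only [Polynomial.coeff_map, Polynomial.coeff_X_pow] at this
  rw [if_neg (by omega)] at this
  exact this
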